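/- Let (X, T, μ) be an ergodic probability measure-preserving system, W a set of positive measure with first return map F and return time τ. If there exists N ≥ 1 and a measurable derivative cocycle D with log|DF^N| ≥ log 2 on W (i.e. |DF^N(z)| ≥ 2 wherever defined), and sup log|DT| = log L < ∞, then the Lyapunov exponent λ(z) = lim (1/n) log|DT^n(z)| exists μ-a.e., is constant, and satisfies μ(W)·(log 2)/N ≤ λ ≤ log L; in particular λ > 0. -/

import Mathlib

open MeasureTheory Filter Topology

/-- The first return time of `z` to `W` under `T`. -/
noncomputable def firstReturn {X : Type*} (T : X → X) (W : Set X) (z : X) : ℕ :=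
  sInf {n : ℕ | 1 ≤ n ∧ T^[n] z ∈ W}

/-- The `n`-th return time `τ^n` to `W` under `T`. -/
noncomputable def returnTimeN {X : Type*} (T : X → X) (W : Set X) : ℕ → X → ℕ
  | 0, _ => 0
  | (n + 1), z =>
      firstReturn T W z + returnTimeN T W n (T^[firstReturn T W z] z)


section Birkhoff

variable {X : Type*} [MeasurableSpace X] {μ : MeasureTheory.Measure X} [IsProbabilityMeasure μ]
variable {T : X → X} {f : X → ℝ}

/-- Running maximum `max_{0 ≤ k ≤ n} S_k f` of Birkhoff sums. -/
noncomputable def birkMax (T : X → X) (f : X → ℝ) : ℕ → X → ℝ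
  | 0, _ => 0
  | (n + 1), x => max (birkMax T f n x) (birkhoffSum T f (n + 1) x)

lemma birkMax_nonneg (T : X → X) (f : X → ℝ) : ∀ n x, 0 ≤ birkMax T f n x := by
  intro n
  induction n with
  | zero => intro x; simp [birkMax]
  | succ n ih => intro x; exact le_trans (ih x) (le_max_left _ _)

lemma birkMax_mono (T : X → X) (f : X → ℝ) (n : ℕ) (x : X) :
    birkMax T f n x ≤ birkMax T f (n + 1) x := le_max_left _ _

lemma birkhoffSum_le_birkMax (T : X → X) (f : X → ℝ) :
    ∀ n k, k ≤ n → ∀ x, birkhoffSum T f k x ≤ birkMax T f n x := by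
  intro n
  induction n with
  | zero =>
    intro k hk x
    interval_cases k
    simp [birkMax, birkhoffSum_zero]
  | succ n ih =>
    intro k hk x
    rcases Nat.lt_succ_iff_lt_or_eq.mp (Nat.lt_succ_of_le hk) with h | h
    · exact le_trans (ih k (Nat.lt_succ_iff.mp h) x) (birkMax_mono T f n x)
    · subst h; exact le_max_right _ _
    
lemma birkMax_succ_eq (T : X → X) (f : X → ℝ) :
    ∀ n x, birkMax T f (n + 1) x = max 0 (f x + birkMax T f n (T x)) := by
  intro n
  induction n with
  | zero =>
    intro x
    simp [birkMax, birkhoffSum_one]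
  | succ n ih =>
    intro x
    have h1 : birkMax T f (n + 2) x = max (birkMax T f (n + 1) x)
        (birkhoffSum T f (n + 2) x) := rfl
    rw [h1, ih x, birkhoffSum_succ' T f (n + 1) x]
    have : birkMax T f (n + 2) (T x) = max (birkMax T f (n + 1) (T x))
        (birkhoffSum T f (n + 2) (T x)) := rfl
    rw [max_assoc]
    congr 1
    rw [max_add_add_left]
    rfl

lemma birkMax_measurable (hT : Measurable T) (hf : Measurable f) (n : ℕ) :
    Measurable (birkMax T f n) := by
  induction n with
  | zero => exact measurable_const
  | succ n ih =>
    exact ih.sup (by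
      apply Finset.measurable_sum
      intro k _
      exact hf.comp (hT.iterate k))

lemma birkhoffSum_measurable (hT : Measurable T) (hf : Measurable f) (n : ℕ) :
    Measurable (birkhoffSum T f n) := by
  apply Finset.measurable_sum
  intro k _
  exact hf.comp (hT.iterate k)

lemma birkhoffSum_integrable (hT : MeasurePreserving T μ μ) (hfi : Integrable f μ) (n : ℕ) :
    Integrable (birkhoffSum T f n) μ := by
  apply MeasureTheory.integrable_finset_sum
  intro k _
  exact ((hT.iterate k).integrable_comp hfi.aestronglyMeasurable).mpr hfi

lemma birkMax_integrable (hT : MeasurePreserving T μ μ) (hf : Measurable f)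
    (hfi : Integrable f μ) (n : ℕ) : Integrable (birkMax T f n) μ := by
  induction n with
  | zero => exact (integrable_const 0).congr (by simp [birkMax])
  | succ n ih => exact ih.sup (birkhoffSum_integrable hT hfi (n + 1))

/-- The maximal ergodic theorem (Garsia's proof). -/
theorem maximal_ergodic (hT : MeasurePreserving T μ μ) (hf : Measurable f)
    (hfi : Integrable f μ) (n : ℕ) :
    0 ≤ ∫ x in {x | 0 < birkMax T f (n + 1) x}, f x ∂μ := by
  set A := {x | 0 < birkMax T f (n + 1) x} with hA
  have hAm : MeasurableSet A := measurableSet_lt measurable_const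
    (birkMax_measurable hT.measurable hf (n + 1))
  have hMi : Integrable (birkMax T f (n + 1)) μ := birkMax_integrable hT hf hfi (n + 1)
  have hMTi : Integrable (fun x => birkMax T f (n + 1) (T x)) μ :=
    (hT.integrable_comp hMi.aestronglyMeasurable).mpr hMi
  -- pointwise: on A, f x ≥ birkMax (n+1) x - birkMax (n+1) (T x)
  have key : ∀ x ∈ A, birkMax T f (n + 1) x - birkMax T f (n + 1) (T x) ≤ f x := by
    intro x hx
    have h1 : birkMax T f (n + 1) x = f x + birkMax T f n (T x) := by
      have h2 := birkMax_succ_eq T f n x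
      rcases max_cases (0 : ℝ) (f x + birkMax T f n (T x)) with ⟨h3, h4⟩ | ⟨h3, h4⟩
      · exfalso
        have hx' : 0 < birkMax T f (n + 1) x := hx
        rw [h2, h3] at hx'
        exact lt_irrefl 0 hx'
      · rw [h2, h3]
    rw [h1]
    have := birkMax_mono T f n (T x)
    linarith
  have step1 : ∫ x in A, (birkMax T f (n + 1) x - birkMax T f (n + 1) (T x)) ∂μ
      ≤ ∫ x in A, f x ∂μ := by
    apply setIntegral_mono_on (hMi.sub hMTi).integrableOn hfi.integrableOn hAm key
  have step2 : ∫ x in A, (birkMax T f (n + 1) x - birkMax T f (n + 1) (T x)) ∂μ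
      = ∫ x in A, birkMax T f (n + 1) x ∂μ - ∫ x in A, birkMax T f (n + 1) (T x) ∂μ :=
    integral_sub hMi.integrableOn hMTi.integrableOn
  have step3 : ∫ x in A, birkMax T f (n + 1) x ∂μ = ∫ x, birkMax T f (n + 1) x ∂μ := by
    rw [← integral_add_compl hAm hMi]
    have : ∫ x in Aᶜ, birkMax T f (n + 1) x ∂μ = 0 := by
      apply setIntegral_eq_zero_of_forall_eq_zero
      intro x hx
      have h0 := birkMax_nonneg T f (n + 1) x
      have : ¬ (0 < birkMax T f (n + 1) x) := hx
      linarith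
    rw [this, add_zero]
  have step4 : ∫ x in A, birkMax T f (n + 1) (T x) ∂μ ≤ ∫ x, birkMax T f (n + 1) (T x) ∂μ := by
    apply setIntegral_le_integral hMTi
    filter_upwards with x using birkMax_nonneg T f (n + 1) (T x)
  have hAESM : AEStronglyMeasurable (birkMax T f (n + 1)) (Measure.map T μ) := by
    rw [hT.map_eq]; exact hMi.aestronglyMeasurable
  have step5 : ∫ x, birkMax T f (n + 1) (T x) ∂μ = ∫ x, birkMax T f (n + 1) x ∂μ := by
    rw [← MeasureTheory.integral_map hT.measurable.aemeasurable hAESM, hT.map_eq]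
  linarith

/-- Key lemma: if `∫ f < c₀ < c` then a.e. eventually `S_n f ≤ c n`. -/
theorem birkhoff_upper (hT : Ergodic T μ) (hf : Measurable f) (hfi : Integrable f μ)
    {c₀ c : ℝ} (h₀ : ∫ x, f x ∂μ < c₀) (hc : c₀ < c) :
    ∀ᵐ x ∂μ, ∀ᶠ n in atTop, birkhoffSum T f n x ≤ c * n := by
  have hTm : MeasurePreserving T μ μ := hT.toMeasurePreserving
  set h : X → ℝ := fun x => f x - c₀ with hh
  have hhm : Measurable h := hf.sub measurable_const
  have hhi : Integrable h μ := hfi.sub (integrable_const c₀)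
  have hint : ∫ x, h x ∂μ < 0 := by
    rw [hh]
    rw [integral_sub hfi (integrable_const c₀), integral_const]
    simp only [probReal_univ, smul_eq_mul, one_mul]
    linarith
  -- the sum relation: S_n f = S_n h + c₀ * n
  have hsum : ∀ n x, birkhoffSum T f n x = birkhoffSum T h n x + c₀ * n := by
    intro n x
    simp only [birkhoffSum, hh, Finset.sum_sub_distrib, Finset.sum_const, Finset.card_range,
      nsmul_eq_mul, sub_add, mul_comm]
    ring
  set B := {x | ∀ M : ℕ, ∃ n : ℕ, (M : ℝ) < birkhoffSum T h n x} with hB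
  have hBR : ∀ x, x ∈ B ↔ ∀ M : ℝ, ∃ n : ℕ, M < birkhoffSum T h n x := by
    intro x
    constructor
    · intro hx M
      obtain ⟨M', hM'⟩ := exists_nat_ge M
      obtain ⟨n, hn⟩ := hx M'
      exact ⟨n, lt_of_le_of_lt hM' hn⟩
    · intro hx M; exact hx M
  have hBmeas : MeasurableSet B := by
    have : B = ⋂ M : ℕ, ⋃ n : ℕ, {x | (M : ℝ) < birkhoffSum T h n x} := by
      ext x; simp [hB]
    rw [this]
    exact MeasurableSet.iInter fun M => MeasurableSet.iUnion fun n =>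
      measurableSet_lt measurable_const (birkhoffSum_measurable hTm.measurable hhm n)
  have hBinv : T ⁻¹' B = B := by
    ext x
    simp only [Set.mem_preimage]
    rw [hBR, hBR]
    constructor
    · intro hx M
      obtain ⟨n, hn⟩ := hx (M - h x)
      refine ⟨n + 1, ?_⟩
      rw [birkhoffSum_succ' T h n x]
      linarith
    · intro hx M
      obtain ⟨n, hn⟩ := hx (max (M + h x) 0)
      have hn1 : 1 ≤ n := by
        rcases Nat.eq_zero_or_pos n with h0 | h1
        · exfalso
          rw [h0] at hn
          simp [birkhoffSum_zero] at hn
        · exact h1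
      obtain ⟨m, rfl⟩ := Nat.exists_eq_add_of_le hn1
      refine ⟨m, ?_⟩
      rw [add_comm 1 m, birkhoffSum_succ' T h m x] at hn
      have := le_max_left (M + h x) 0
      linarith
  have hB01 := hT.measure_self_or_compl_eq_zero hBmeas hBinv
  have hBzero : μ B = 0 := by
    rcases hB01 with h1 | h1
    · exact h1
    · -- μ Bᶜ = 0 : derive a contradiction via the maximal ergodic theorem
      exfalso
      set A : ℕ → Set X := fun n => {x | 0 < birkMax T h (n + 1) x} with hA
      have hAm : ∀ n, MeasurableSet (A n) := fun n =>
        measurableSet_lt measurable_const (birkMax_measurable hTm.measurable hhm (n + 1))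
      have hAmono : Monotone A := by
        apply monotone_nat_of_le_succ
        intro n x hx
        exact lt_of_lt_of_le hx (birkMax_mono T h (n + 1) x)
      have hBsub : B ⊆ ⋃ n, A n := by
        intro x hx
        obtain ⟨n, hn⟩ := hx 0
        have hn1 : 1 ≤ n := by
          rcases Nat.eq_zero_or_pos n with h0 | h1
          · exfalso; rw [h0] at hn; simp [birkhoffSum_zero] at hn
          · exact h1
        obtain ⟨m, rfl⟩ := Nat.exists_eq_add_of_le hn1
        refine Set.mem_iUnion.mpr ⟨m, ?_⟩
        have : birkhoffSum T h (1 + m) x ≤ birkMax T h (m + 1) x :=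
          birkhoffSum_le_birkMax T h (m + 1) (1 + m) (by omega) x
        simp only [A, Set.mem_setOf_eq]
        calc (0 : ℝ) < birkhoffSum T h (1 + m) x := by exact_mod_cast hn
          _ ≤ birkMax T h (m + 1) x := this
      have hUnull : μ (⋃ n, A n)ᶜ = 0 :=
        measure_mono_null (Set.compl_subset_compl.mpr hBsub) h1
      have hlim : Tendsto (fun n => ∫ x in A n, h x ∂μ) atTop (𝓝 (∫ x in ⋃ n, A n, h x ∂μ)) :=
        tendsto_setIntegral_of_monotone hAm hAmono hhi.integrableOn
      have hUeq : ∫ x in ⋃ n, A n, h x ∂μ = ∫ x, h x ∂μ := by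
        rw [← integral_add_compl (MeasurableSet.iUnion hAm) hhi]
        have : ∫ x in (⋃ n, A n)ᶜ, h x ∂μ = 0 := by
          rw [Measure.restrict_eq_zero.mpr hUnull]
          exact integral_zero_measure h
        rw [this, add_zero]
      have hge : 0 ≤ ∫ x in ⋃ n, A n, h x ∂μ :=
        ge_of_tendsto hlim (Filter.Eventually.of_forall fun n => maximal_ergodic hTm hhm hhi n)
      rw [hUeq] at hge
      linarith
  -- conclude
  rw [MeasureTheory.ae_iff]
  have hsubset : {x | ¬ ∀ᶠ n in atTop, birkhoffSum T f n x ≤ c * n} ⊆ B := by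
    intro x hx
    simp only [Set.mem_setOf_eq, Filter.not_eventually] at hx
    rw [hBR]
    intro M
    have hfreq : ∀ m : ℕ, ∃ n ≥ m, c * n < birkhoffSum T f n x := by
      intro m
      obtain ⟨n, hn, hn'⟩ := (frequently_atTop.mp hx) m
      exact ⟨n, hn, not_le.mp hn'⟩
    obtain ⟨m, hm⟩ := exists_nat_gt (M / (c - c₀))
    obtain ⟨n, hnm, hn⟩ := hfreq m
    refine ⟨n, ?_⟩
    have hSn : birkhoffSum T h n x = birkhoffSum T f n x - c₀ * n := by
      rw [hsum n x]; ring
    rw [hSn]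
    have h2 : (M / (c - c₀)) < (n : ℝ) := by
      calc (M / (c - c₀)) < (m : ℝ) := hm
        _ ≤ n := by exact_mod_cast hnm
    have h3 : M < (c - c₀) * n := by
      rw [div_lt_iff₀ (by linarith : (0:ℝ) < c - c₀)] at h2
      linarith [h2]
    nlinarith [hn]
  exact measure_mono_null hsubset hBzero

/-- Birkhoff's pointwise ergodic theorem (ergodic case). -/
theorem birkhoff_ergodic (hT : Ergodic T μ) (hf : Measurable f) (hfi : Integrable f μ) :
    ∀ᵐ x ∂μ, Tendsto (fun n : ℕ => birkhoffSum T f n x / n) atTop (𝓝 (∫ x, f x ∂μ)) := by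
  set I := ∫ x, f x ∂μ with hI
  have hup : ∀ᵐ x ∂μ, ∀ m : ℕ, ∀ᶠ n in atTop,
      birkhoffSum T f n x ≤ (I + 1 / (m + 1)) * n := by
    rw [MeasureTheory.ae_all_iff]
    intro m
    apply birkhoff_upper hT hf hfi (c₀ := I + 1 / (2 * (m + 1)))
    · have : (0:ℝ) < 1 / (2 * ((m:ℝ) + 1)) := by positivity
      linarith
    · have h1 : (0:ℝ) < (m:ℝ) + 1 := by positivity
      have : 1 / (2 * ((m:ℝ) + 1)) < 1 / ((m:ℝ) + 1) := by
        rw [div_lt_div_iff₀ (by positivity) (by positivity)]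
        nlinarith
      linarith
  have hlow : ∀ᵐ x ∂μ, ∀ m : ℕ, ∀ᶠ n in atTop,
      (I - 1 / (m + 1)) * n ≤ birkhoffSum T f n x := by
    rw [MeasureTheory.ae_all_iff]
    intro m
    have hneg : Integrable (fun x => -f x) μ := hfi.neg
    have hnegI : ∫ x, -f x ∂μ = -I := by rw [integral_neg]
    have key := birkhoff_upper hT hf.neg hneg (c₀ := -I + 1 / (2 * (m + 1)))
      (c := -I + 1 / (m + 1)) (by
        rw [show ∫ x, (-f) x ∂μ = -I from hnegI]
        have h0 : (0:ℝ) < 1 / (2 * ((m:ℝ) + 1)) := by positivity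
        linarith) (by
        have h1 : (0:ℝ) < (m:ℝ) + 1 := by positivity
        have : 1 / (2 * ((m:ℝ) + 1)) < 1 / ((m:ℝ) + 1) := by
          rw [div_lt_div_iff₀ (by positivity) (by positivity)]
          nlinarith
        linarith)
    filter_upwards [key] with x hx
    filter_upwards [hx] with n hn
    have hSneg : birkhoffSum T (fun y => -f y) n x = -birkhoffSum T f n x := by
      simp [birkhoffSum, Finset.sum_neg_distrib]
    rw [show birkhoffSum T (-f) n x = -birkhoffSum T f n x from hSneg] at hn
    nlinarith
  filter_upwards [hup, hlow] with x hxu hxl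
  rw [Metric.tendsto_atTop]
  intro ε hε
  obtain ⟨m, hm⟩ := exists_nat_one_div_lt hε
  have h1 : (0:ℝ) < (m:ℝ) + 1 := by positivity
  obtain ⟨n₁, hn₁⟩ := eventually_atTop.mp (hxu m)
  obtain ⟨n₂, hn₂⟩ := eventually_atTop.mp (hxl m)
  refine ⟨max (max n₁ n₂) 1, fun n hn => ?_⟩
  have hn1 : n₁ ≤ n := le_trans (le_trans (le_max_left _ _) (le_max_left _ _)) hn
  have hn2 : n₂ ≤ n := le_trans (le_trans (le_max_right _ _) (le_max_left _ _)) hn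
  have hnpos : (0:ℝ) < n := by
    have : 1 ≤ n := le_trans (le_max_right _ _) hn
    exact_mod_cast this
  have hu := hn₁ n hn1
  have hl := hn₂ n hn2
  rw [Real.dist_eq, abs_sub_lt_iff]
  constructor
  · have : birkhoffSum T f n x / n ≤ I + 1 / (m + 1) := by
      rw [div_le_iff₀ hnpos]
      linarith [hu]
    calc birkhoffSum T f n x / n - I ≤ 1 / (m + 1) := by linarith
      _ < ε := by exact_mod_cast hm
  · have : I - 1 / (m + 1) ≤ birkhoffSum T f n x / n := by
      rw [le_div_iff₀ hnpos]
      linarith [hl]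
    calc I - birkhoffSum T f n x / n ≤ 1 / (m + 1) := by linarith
      _ < ε := by exact_mod_cast hm

end Birkhoff

section ReturnTimes

variable {X : Type*} (T : X → X) (W : Set X)

lemma firstReturn_spec {y : X} (h : {n : ℕ | 1 ≤ n ∧ T^[n] y ∈ W}.Nonempty) :
    1 ≤ firstReturn T W y ∧ T^[firstReturn T W y] y ∈ W := Nat.sInf_mem h

lemma firstReturn_min {y : X} {r : ℕ} (h1 : 1 ≤ r) (h2 : r < firstReturn T W y) :
    T^[r] y ∉ W := fun hmem => Nat.notMem_of_lt_sInf h2 ⟨h1, hmem⟩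

lemma returnTimeN_add (a b : ℕ) (z : X) :
    returnTimeN T W (a + b) z
      = returnTimeN T W a z + returnTimeN T W b (T^[returnTimeN T W a z] z) := by
  induction a generalizing z with
  | zero => simp [returnTimeN]
  | succ a ih =>
    have h1 : a + 1 + b = (a + b) + 1 := by omega
    rw [h1]
    show firstReturn T W z + returnTimeN T W (a + b) (T^[firstReturn T W z] z) = _
    rw [ih (T^[firstReturn T W z] z)]
    show _ = firstReturn T W z + returnTimeN T W a (T^[firstReturn T W z] z)
      + returnTimeN T W b (T^[returnTimeN T W (a + 1) z] z)
    rw [add_assoc]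
    congr 2
    · show _ = returnTimeN T W b
        (T^[firstReturn T W z + returnTimeN T W a (T^[firstReturn T W z] z)] z)
      congr 1
      rw [add_comm (firstReturn T W z), Function.iterate_add_apply]

lemma returnTimeN_succ_right (m : ℕ) (z : X) :
    returnTimeN T W (m + 1) z
      = returnTimeN T W m z + firstReturn T W (T^[returnTimeN T W m z] z) := by
  have := returnTimeN_add T W m 1 z
  simpa [returnTimeN] using this

variable {z : X}

/-- Nonemptiness of return-time sets along the orbit. -/
lemma orbit_ret_nonempty (Hrec : ∀ m : ℕ, ∃ n : ℕ, 1 ≤ n ∧ T^[n + m] z ∈ W) (m : ℕ) :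
    {n : ℕ | 1 ≤ n ∧ T^[n] (T^[m] z) ∈ W}.Nonempty := by
  obtain ⟨n, h1, h2⟩ := Hrec m
  exact ⟨n, h1, by rwa [← Function.iterate_add_apply]⟩

lemma returnTime_props (hz : z ∈ W) (Hrec : ∀ m : ℕ, ∃ n : ℕ, 1 ≤ n ∧ T^[n + m] z ∈ W) :
    ∀ m : ℕ, T^[returnTimeN T W m z] z ∈ W
      ∧ returnTimeN T W m z < returnTimeN T W (m + 1) z := by
  intro m
  induction m with
  | zero =>
    have h0 : returnTimeN T W 0 z = 0 := rfl
    constructor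
    · rw [h0]; exact hz
    · rw [returnTimeN_succ_right]
      have h1 := (firstReturn_spec T W
        (orbit_ret_nonempty T W Hrec (returnTimeN T W 0 z))).1
      omega
  | succ m ih =>
    obtain ⟨hmem, hlt⟩ := ih
    set y := T^[returnTimeN T W m z] z with hy
    have hne := orbit_ret_nonempty T W Hrec (returnTimeN T W m z)
    obtain ⟨hfr1, hfrW⟩ := firstReturn_spec T W hne
    have hstep : returnTimeN T W (m + 1) z = returnTimeN T W m z + firstReturn T W y :=
      returnTimeN_succ_right T W m z
    have hmem' : T^[returnTimeN T W (m + 1) z] z ∈ W := by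
      rw [hstep, add_comm, Function.iterate_add_apply]
      exact hfrW
    refine ⟨hmem', ?_⟩
    rw [returnTimeN_succ_right T W (m + 1) z]
    have hne' := orbit_ret_nonempty T W Hrec (returnTimeN T W (m + 1) z)
    have := (firstReturn_spec T W hne').1
    omega

lemma count_returns (hz : z ∈ W) (Hrec : ∀ m : ℕ, ∃ n : ℕ, 1 ≤ n ∧ T^[n + m] z ∈ W) :
    ∀ m : ℕ, birkhoffSum T (W.indicator (1 : X → ℝ)) (returnTimeN T W m z) z = m := by
  intro m
  induction m with
  | zero => simp [returnTimeN, birkhoffSum_zero]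
  | succ m ih =>
    rw [returnTimeN_succ_right, birkhoffSum_add, ih]
    set y := T^[returnTimeN T W m z] z with hy
    have hyW : y ∈ W := (returnTime_props T W hz Hrec m).1
    have hne := orbit_ret_nonempty T W Hrec (returnTimeN T W m z)
    have hfr1 : 1 ≤ firstReturn T W y := (firstReturn_spec T W hne).1
    have hblock : birkhoffSum T (W.indicator (1 : X → ℝ)) (firstReturn T W y) y = 1 := by
      rw [birkhoffSum]
      rw [Finset.sum_eq_single_of_mem 0 (Finset.mem_range.mpr (by omega))]
      · simp [Set.indicator_of_mem hyW]
      · intro b hb hb0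
        have hbW : T^[b] y ∉ W :=
          firstReturn_min T W (by omega) (Finset.mem_range.mp hb)
        simp [Set.indicator_of_notMem hbW]
    rw [hblock]
    push_cast
    ring

lemma block_bound (hz : z ∈ W) (Hrec : ∀ m : ℕ, ∃ n : ℕ, 1 ≤ n ∧ T^[n + m] z ∈ W)
    (g : X → ℝ) (N : ℕ)
    (Hexp : ∀ m : ℕ, T^[m] z ∈ W →
      Real.log 2 ≤ birkhoffSum T g (returnTimeN T W N (T^[m] z)) (T^[m] z)) :
    ∀ k : ℕ, (k : ℝ) * Real.log 2 ≤ birkhoffSum T g (returnTimeN T W (k * N) z) z := by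
  intro k
  induction k with
  | zero => simp [returnTimeN, birkhoffSum_zero]
  | succ k ih =>
    have h1 : (k + 1) * N = k * N + N := by ring
    rw [h1, returnTimeN_add, birkhoffSum_add]
    set y := T^[returnTimeN T W (k * N) z] z with hy
    have hyW : y ∈ W := (returnTime_props T W hz Hrec (k * N)).1
    have hblk := Hexp (returnTimeN T W (k * N) z) hyW
    push_cast
    linarith

lemma returnTimeN_strictMono (hz : z ∈ W)
    (Hrec : ∀ m : ℕ, ∃ n : ℕ, 1 ≤ n ∧ T^[n + m] z ∈ W) :
    StrictMono (fun m => returnTimeN T W m z) :=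
  strictMono_nat_of_lt_succ fun m => (returnTime_props T W hz Hrec m).2

end ReturnTimes

/-- If `(X, T, μ)` is ergodic, `W` has positive measure, the induced map `F = T^τ`
satisfies `|DF^N| ≥ 2` on `W` (expressed via the additive cocycle `g = log|DT|`
summed along the `N`-th return block), and `log|DT| ≤ log L`, then the Lyapunov
exponent `λ(z) = lim (1/n) Σ_{j<n} g(T^j z)` exists `μ`-a.e., is constant, and
satisfies `μ(W) log 2 / N ≤ λ ≤ log L`; in particular `λ > 0`. -/
theorem stmt7 {X : Type*} [MeasurableSpace X] (μ : Measure X) [IsProbabilityMeasure μ]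
    (T : X → X) (hT : Ergodic T μ)
    (W : Set X) (hW : MeasurableSet W) (hWpos : 0 < μ W)
    (g : X → ℝ) (hg : Measurable g) (L : ℝ) (hL : 1 < L)
    (hgL : ∀ x, g x ≤ Real.log L)
    (N : ℕ) (hN : 1 ≤ N)
    (hexp : ∀ᵐ z ∂μ, z ∈ W → 0 < returnTimeN T W N z ∧
      Real.log 2 ≤ ∑ j ∈ Finset.range (returnTimeN T W N z), g (T^[j] z)) :
    ∃ lam : ℝ, 0 < lam ∧ (μ W).toReal * Real.log 2 / N ≤ lam ∧ lam ≤ Real.log L ∧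
      ∀ᵐ z ∂μ, Tendsto (fun n : ℕ => (∑ j ∈ Finset.range n, g (T^[j] z)) / n)
        atTop (𝓝 lam) :=
    by
  classical
  have hTm : MeasurePreserving T μ μ := hT.toMeasurePreserving
  have hTmeas : Measurable T := hTm.measurable
  set c₁ : ℝ := (μ W).toReal * Real.log 2 / N with hc₁
  have hμW : 0 < (μ W).toReal := ENNReal.toReal_pos hWpos.ne' (measure_ne_top μ W)
  have hlog2 : 0 < Real.log 2 := Real.log_pos one_lt_two
  have hNpos : (0:ℝ) < N := by exact_mod_cast hN
  have hc₁pos : 0 < c₁ := by positivity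
  have hlogL : 0 < Real.log L := Real.log_pos hL
  -- the indicator of W
  set χ : X → ℝ := W.indicator 1 with hχdef
  have hχmeas : Measurable χ := measurable_one.indicator hW
  have hχint : Integrable χ μ := (integrable_const (1:ℝ)).indicator hW
  have hχint_eq : ∫ x, χ x ∂μ = (μ W).toReal := by
    rw [hχdef]
    have := integral_indicator_const (μ := μ) (1:ℝ) hW
    simp at this; exact this
  -- the truncations of g
  set gM : ℕ → X → ℝ := fun M x => max (g x) (-(M:ℝ)) with hgMdef
  have hgMmeas : ∀ M, Measurable (gM M) := fun M => hg.max measurable_const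
  have hgle : ∀ M x, g x ≤ gM M x := fun M x => le_max_left _ _
  have hgMabs : ∀ M x, |gM M x| ≤ |g x| + (M:ℝ) := by
    intro M x
    rcases le_total (-(M:ℝ)) (g x) with h | h
    · have : gM M x = g x := max_eq_left h
      rw [this]
      have : (0:ℝ) ≤ M := Nat.cast_nonneg M
      linarith [abs_nonneg (g x)]
    · have : gM M x = -(M:ℝ) := max_eq_right h
      rw [this, abs_neg, abs_of_nonneg (Nat.cast_nonneg M : (0:ℝ) ≤ M)]
      linarith [abs_nonneg (g x)]
  have hgMub : ∀ M x, gM M x ≤ Real.log L := by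
    intro M x
    apply max_le (hgL x)
    have : (0:ℝ) ≤ M := Nat.cast_nonneg M
    linarith
  have hgMabs' : ∀ M x, |gM M x| ≤ max (Real.log L) M := by
    intro M x
    rw [abs_le]
    constructor
    · have h1 : -(M:ℝ) ≤ gM M x := le_max_right _ _
      have h2 : (M:ℝ) ≤ max (Real.log L) M := le_max_right _ _
      linarith
    · exact le_trans (hgMub M x) (le_max_left _ _)
  have hgMint : ∀ M, Integrable (gM M) μ := fun M =>
    ⟨(hgMmeas M).aestronglyMeasurable,
      HasFiniteIntegral.of_bounded (C := max (Real.log L) M)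
        (Filter.Eventually.of_forall fun x => by
          simpa [Real.norm_eq_abs] using hgMabs' M x)⟩
  have hgMle : ∀ M x, |gM M x| ≤ |g x| := by
    intro M x
    rcases le_total (-(M:ℝ)) (g x) with h | h
    · have h1 : gM M x = g x := max_eq_left h
      rw [h1]
    · have h1 : gM M x = -(M:ℝ) := max_eq_right h
      rw [h1, abs_neg, abs_of_nonneg (Nat.cast_nonneg M : (0:ℝ) ≤ M)]
      have h2 : (M:ℝ) ≤ -(g x) := by linarith
      calc (M:ℝ) ≤ -(g x) := h2
        _ ≤ |g x| := neg_le_abs (g x)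
  -- a.e. facts
  have hBχ := birkhoff_ergodic hT hχmeas hχint
  have hBgM : ∀ᵐ z ∂μ, ∀ M : ℕ,
      Tendsto (fun n : ℕ => birkhoffSum T (gM M) n z / n) atTop (𝓝 (∫ x, gM M x ∂μ)) := by
    rw [ae_all_iff]
    exact fun M => birkhoff_ergodic hT (hgMmeas M) (hgMint M)
  have hcons : Conservative T μ := hTm.conservative
  have hrec0 : ∀ᵐ z ∂μ, z ∈ W → ∃ᶠ n in atTop, T^[n] z ∈ W :=
    hcons.ae_mem_imp_frequently_image_mem hW.nullMeasurableSet
  set P : X → Prop := fun z => z ∈ W → 0 < returnTimeN T W N z ∧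
      Real.log 2 ≤ birkhoffSum T g (returnTimeN T W N z) z with hPdef
  have hexp' : ∀ᵐ z ∂μ, P z := hexp
  have horbP : ∀ᵐ z ∂μ, ∀ m : ℕ, P (T^[m] z) := by
    rw [ae_all_iff]
    intro m
    have h0 : μ {z | ¬ P z} = 0 := ae_iff.mp hexp'
    have h1 : μ (T^[m] ⁻¹' {z | ¬ P z}) = 0 :=
      (hTm.iterate m).quasiMeasurePreserving.preimage_null h0
    rw [ae_iff]
    exact h1
  -- the good set
  have hgood : ∀ᵐ z ∂μ, (Tendsto (fun n : ℕ => birkhoffSum T χ n z / n) atTop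
        (𝓝 ((μ W).toReal)))
      ∧ (∀ M : ℕ, Tendsto (fun n : ℕ => birkhoffSum T (gM M) n z / n) atTop
        (𝓝 (∫ x, gM M x ∂μ)))
      ∧ (z ∈ W → ∃ᶠ n in atTop, T^[n] z ∈ W)
      ∧ (∀ m : ℕ, P (T^[m] z)) := by
    filter_upwards [hBχ, hBgM, hrec0, horbP] with z h1 h2 h3 h4
    exact ⟨hχint_eq ▸ h1, h2, h3, h4⟩
  -- a good point in W exists
  set Q : X → Prop := fun z => (Tendsto (fun n : ℕ => birkhoffSum T χ n z / n) atTop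
        (𝓝 ((μ W).toReal)))
      ∧ (∀ M : ℕ, Tendsto (fun n : ℕ => birkhoffSum T (gM M) n z / n) atTop
        (𝓝 (∫ x, gM M x ∂μ)))
      ∧ (z ∈ W → ∃ᶠ n in atTop, T^[n] z ∈ W)
      ∧ (∀ m : ℕ, P (T^[m] z)) with hQdef
  have hzex : ∃ z, z ∈ W ∧ Q z := by
    have hne : μ {z | z ∈ W ∧ Q z} ≠ 0 := by
      intro h0
      have hsub : W ⊆ {z | z ∈ W ∧ Q z} ∪ {z | ¬ Q z} := by
        intro z hz
        by_cases hq : Q z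
        · exact Or.inl ⟨hz, hq⟩
        · exact Or.inr hq
      have : μ W ≤ μ {z | z ∈ W ∧ Q z} + μ {z | ¬ Q z} :=
        le_trans (measure_mono hsub) (measure_union_le _ _)
      rw [h0, ae_iff.mp hgood, add_zero] at this
      exact absurd (le_antisymm this zero_le) hWpos.ne'
    exact nonempty_of_measure_ne_zero hne
  obtain ⟨z, hzW, hQ1, hQ2, hQ3, hQ4⟩ := hzex
  -- recurrence hypothesis at z
  have Hrec : ∀ m : ℕ, ∃ n : ℕ, 1 ≤ n ∧ T^[n + m] z ∈ W := by
    intro m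
    obtain ⟨n, hn, hmem⟩ := (frequently_atTop.mp (hQ3 hzW)) (m + 1)
    exact ⟨n - m, by omega, by rwa [Nat.sub_add_cancel (by omega)]⟩
  have Hexp : ∀ m : ℕ, T^[m] z ∈ W →
      Real.log 2 ≤ birkhoffSum T g (returnTimeN T W N (T^[m] z)) (T^[m] z) :=
    fun m hm => (hQ4 m hm).2
  -- the return-time subsequence
  set τ : ℕ → ℕ := fun m => returnTimeN T W m z with hτdef
  have hsm : StrictMono τ := returnTimeN_strictMono T W hzW Hrec
  set a : ℕ → ℕ := fun k => τ (k * N) with hadef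
  have hamono : StrictMono a := fun k k' hk =>
    hsm ((Nat.mul_lt_mul_right (show 0 < N by omega)).mpr hk)
  have hatop : Tendsto a atTop atTop := hamono.tendsto_atTop
  have hapos : ∀ k : ℕ, 1 ≤ k → 0 < a k := by
    intro k hk
    have h1 : k * N ≤ τ (k * N) := hsm.le_apply
    have h2 : 0 < k * N := Nat.mul_pos (by omega) (by omega)
    show 0 < τ (k * N)
    omega
  -- limit 1 : (k N)/(a k) → μ W
  have hlim1 : Tendsto (fun k : ℕ => ((k * N : ℕ) : ℝ) / (a k : ℝ)) atTop
      (𝓝 ((μ W).toReal)) := by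
    have hcomp := hQ1.comp hatop
    apply hcomp.congr
    intro k
    simp only [Function.comp_apply]
    congr 1
    exact count_returns T W hzW Hrec (k * N)
  -- limit 1' : (log 2 / N) * ((k N)/(a k)) → c₁
  have hlim1' : Tendsto (fun k : ℕ => (Real.log 2 / N) * (((k * N : ℕ) : ℝ) / (a k : ℝ)))
      atTop (𝓝 c₁) := by
    have := hlim1.const_mul (Real.log 2 / N)
    convert this using 2
    rw [hc₁]
    ring
  -- stage 1 : c₁ ≤ ∫ gM M for every M
  have stage1 : ∀ M : ℕ, c₁ ≤ ∫ x, gM M x ∂μ := by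
    intro M
    have hlim2 : Tendsto (fun k : ℕ => birkhoffSum T (gM M) (a k) z / (a k : ℝ)) atTop
        (𝓝 (∫ x, gM M x ∂μ)) := (hQ2 M).comp hatop
    refine le_of_tendsto_of_tendsto hlim1' hlim2 ?_
    filter_upwards [eventually_ge_atTop 1] with k hk
    have hak : (0:ℝ) < (a k : ℝ) := by exact_mod_cast hapos k hk
    have hblk : (k : ℝ) * Real.log 2 ≤ birkhoffSum T g (a k) z :=
      block_bound T W hzW Hrec g N Hexp k
    have hmono : birkhoffSum T g (a k) z ≤ birkhoffSum T (gM M) (a k) z :=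
      Finset.sum_le_sum fun j _ => hgle M (T^[j] z)
    have hLHS : (Real.log 2 / N) * (((k * N : ℕ) : ℝ) / (a k : ℝ))
        = ((k : ℝ) * Real.log 2) / (a k : ℝ) := by
      push_cast
      field_simp
    rw [hLHS]
    have hnum : (k : ℝ) * Real.log 2 ≤ birkhoffSum T (gM M) (a k) z :=
      le_trans hblk hmono
    gcongr
  -- stage 2 : g is integrable
  have hgint : Integrable g μ := by
    set φ : ℕ → X → ENNReal := fun M x => ENNReal.ofReal (-(gM M x)) with hφdef
    have hφmeas : ∀ M, Measurable (φ M) :=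
      fun M => ENNReal.measurable_ofReal.comp (hgMmeas M).neg
    have hφmono : Monotone φ := by
      intro M M' hMM' x
      apply ENNReal.ofReal_le_ofReal
      have h2 : gM M' x ≤ gM M x := max_le_max (le_refl (g x))
        (neg_le_neg (by exact_mod_cast Nat.cast_le.mpr hMM'))
      linarith
    have hφbd : ∀ M, ∫⁻ x, φ M x ∂μ ≤ ENNReal.ofReal (Real.log L - c₁) := by
      intro M
      set ψ : X → ℝ := fun x => Real.log L - gM M x with hψdef
      have hψnn : 0 ≤ᵐ[μ] ψ := Filter.Eventually.of_forall fun x => by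
        have := hgMub M x
        simp only [hψdef, Pi.zero_apply]
        linarith
      have hψint : Integrable ψ μ := (integrable_const (Real.log L)).sub (hgMint M)
      have h1 : ∀ x, φ M x ≤ ENNReal.ofReal (ψ x) := by
        intro x
        apply ENNReal.ofReal_le_ofReal
        simp only [hψdef]
        linarith [hlogL.le]
      calc ∫⁻ x, φ M x ∂μ ≤ ∫⁻ x, ENNReal.ofReal (ψ x) ∂μ := lintegral_mono h1
        _ = ENNReal.ofReal (∫ x, ψ x ∂μ) :=
            (ofReal_integral_eq_lintegral_ofReal hψint hψnn).symm
        _ ≤ ENNReal.ofReal (Real.log L - c₁) := by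
            apply ENNReal.ofReal_le_ofReal
            have h2 : ∫ x, ψ x ∂μ = Real.log L - ∫ x, gM M x ∂μ := by
              rw [hψdef]
              rw [integral_sub (integrable_const _) (hgMint M), integral_const]
              simp [measure_univ]
            rw [h2]
            linarith [stage1 M]
    have hφsup : ∀ x, ⨆ M : ℕ, φ M x = ENNReal.ofReal (-(g x)) := by
      intro x
      apply le_antisymm
      · apply iSup_le
        intro M
        apply ENNReal.ofReal_le_ofReal
        have h2 : g x ≤ gM M x := hgle M x
        linarith
      · obtain ⟨M, hM⟩ := exists_nat_ge (-(g x))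
        have : φ M x = ENNReal.ofReal (-(g x)) := by
          simp only [hφdef]
          congr 1
          have h1 : -(M:ℝ) ≤ g x := by linarith
          have h2 : gM M x = g x := max_eq_left h1
          rw [h2]
        rw [← this]
        exact le_iSup (fun M => φ M x) M
    have hneg_fin : ∫⁻ x, ENNReal.ofReal (-(g x)) ∂μ ≤ ENNReal.ofReal (Real.log L - c₁) := by
      have h1 : ∫⁻ x, ENNReal.ofReal (-(g x)) ∂μ = ⨆ M : ℕ, ∫⁻ x, φ M x ∂μ := by
        rw [← lintegral_iSup hφmeas hφmono]
        apply lintegral_congr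
        intro x
        exact (hφsup x).symm
      rw [h1]
      exact iSup_le hφbd
    refine ⟨hg.aestronglyMeasurable, ?_⟩
    rw [hasFiniteIntegral_iff_norm]
    have hptw : ∀ x, ENNReal.ofReal ‖g x‖
        ≤ ENNReal.ofReal (Real.log L) + ENNReal.ofReal (-(g x)) := by
      intro x
      rcases le_total 0 (g x) with h | h
      · have h1 : ‖g x‖ = g x := abs_of_nonneg h
        calc ENNReal.ofReal ‖g x‖ ≤ ENNReal.ofReal (Real.log L) := by
              apply ENNReal.ofReal_le_ofReal; rw [h1]; exact hgL x
          _ ≤ _ := le_self_add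
      · have h1 : ‖g x‖ = -(g x) := abs_of_nonpos h
        calc ENNReal.ofReal ‖g x‖ = ENNReal.ofReal (-(g x)) := by rw [h1]
          _ ≤ _ := le_add_self
    calc ∫⁻ x, ENNReal.ofReal ‖g x‖ ∂μ
        ≤ ∫⁻ x, (ENNReal.ofReal (Real.log L) + ENNReal.ofReal (-(g x))) ∂μ :=
          lintegral_mono hptw
      _ = ENNReal.ofReal (Real.log L) * μ Set.univ + ∫⁻ x, ENNReal.ofReal (-(g x)) ∂μ := by
          rw [lintegral_add_left measurable_const, lintegral_const]
      _ ≤ ENNReal.ofReal (Real.log L) + ENNReal.ofReal (Real.log L - c₁) := by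
          rw [measure_univ, mul_one]
          exact add_le_add (le_refl _) hneg_fin
      _ < ⊤ := by
          apply ENNReal.add_lt_top.mpr
          exact ⟨ENNReal.ofReal_lt_top, ENNReal.ofReal_lt_top⟩
  -- stage 3 : conclude with lam = ∫ g
  set lam : ℝ := ∫ x, g x ∂μ with hlam
  have hBg := birkhoff_ergodic hT hg hgint
  have hlamL : lam ≤ Real.log L := by
    have := integral_mono hgint (integrable_const (Real.log L)) hgL
    rwa [integral_const, probReal_univ, smul_eq_mul, one_mul] at this
  have hgMtend : Tendsto (fun M : ℕ => ∫ x, gM M x ∂μ) atTop (𝓝 lam) := by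
    apply tendsto_integral_of_dominated_convergence (fun x => |g x|)
      (fun M => (hgMmeas M).aestronglyMeasurable) hgint.abs
    · intro M
      exact Filter.Eventually.of_forall fun x => by
        simpa [Real.norm_eq_abs] using hgMle M x
    · apply Filter.Eventually.of_forall
      intro x
      obtain ⟨M₀, hM₀⟩ := exists_nat_ge (-(g x))
      apply Tendsto.congr' ?_ tendsto_const_nhds
      filter_upwards [eventually_ge_atTop M₀] with M hM
      have h1 : -(M:ℝ) ≤ g x := by
        have : (M₀:ℝ) ≤ M := by exact_mod_cast hM
        linarith
      exact (max_eq_left h1).symm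
  have hc₁lam : c₁ ≤ lam := ge_of_tendsto hgMtend (Filter.Eventually.of_forall stage1)
  refine ⟨lam, lt_of_lt_of_le hc₁pos hc₁lam, hc₁lam, hlamL, ?_⟩
  exact hBg
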